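/- Let X be a real Hilbert space, K ⊆ X a nonempty closed convex set, η a parameter in a Hilbert space Y, j(η,·) : K → ℝ convex, positively homogeneous and Lipschitz continuous, f : I → X a function, t ∈ I, and z, u ∈ X. Define J(η,v) = j(η,v) for v ∈ K and +∞ otherwise, C(η) = ∂J(η,·)(0) and C(η,t) = f(t) - C(η). Then the following two statements are equivalent: (i) u ∈ K and j(η,v) - j(η,u) ≥ ⟨f(t) - z, v - u⟩ for all v ∈ K; (ii) -u ∈ N_{C(η,t)}(z). -/

import Mathlib

open RealInnerProductSpace

/-- The normal cone of a set `D` at a point `z`: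
`N_D(z) = {ξ : ⟪ξ, w - z⟫ ≤ 0 ∀ w ∈ D}` if `z ∈ D`, and `∅` otherwise. -/
def normalCone {X : Type*} [NormedAddCommGroup X] [InnerProductSpace ℝ X]
    (D : Set X) (z : X) : Set X :=
  {ξ : X | z ∈ D ∧ ∀ w ∈ D, ⟪ξ, w - z⟫ ≤ 0}

/-- If `l * a ≤ b` for all positive `l`, then `a ≤ 0`. -/
lemma aux_nonpos_of_forall (a b : ℝ) (h : ∀ l : ℝ, 0 < l → l * a ≤ b) : a ≤ 0 := by
  by_contra h'
  push_neg at h'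
  have hl : (0:ℝ) < (max b 0 + 1) / a := by positivity
  have := h _ hl
  rw [div_mul_cancel₀ _ (ne_of_gt h')] at this
  have : b ≤ max b 0 := le_max_left _ _
  linarith [le_max_left b 0]

set_option maxHeartbeats 1000000 in
/-- Lemma 3 of the paper: for `C(η) = ∂J(η,·)(0) = {ξ : ⟪ξ,v⟫ ≤ j(η,v) ∀ v ∈ K}`
and `C(η,t) = f(t) - C(η)`, the variational inequality
`u ∈ K`, `j(η,v) - j(η,u) ≥ ⟪f(t) - z, v - u⟫ ∀ v ∈ K` is equivalent to the
inclusion `-u ∈ N_{C(η,t)}(z)`. -/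
theorem variational_inequality_iff_normalCone
    {X Y : Type*} [NormedAddCommGroup X] [InnerProductSpace ℝ X] [CompleteSpace X]
    [NormedAddCommGroup Y] [InnerProductSpace ℝ Y] [CompleteSpace Y]
    (K : Set X) (hKne : K.Nonempty) (hKcl : IsClosed K) (hKcv : Convex ℝ K)
    (hKcone : ∀ c : ℝ, 0 < c → ∀ x ∈ K, c • x ∈ K) (hK0 : (0 : X) ∈ K)
    (j : Y → X → ℝ) (η : Y)
    (hjconv : ConvexOn ℝ K (j η))
    (hjpos : ∀ l : ℝ, 0 < l → ∀ v ∈ K, j η (l • v) = l * j η v)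
    (hjlip : ∃ Lj : ℝ, ∀ v ∈ K, ∀ w ∈ K, |j η v - j η w| ≤ Lj * ‖v - w‖)
    (I : Set ℝ) (f : ℝ → X) (t : ℝ) (ht : t ∈ I) (z u : X) :
    (u ∈ K ∧ ∀ v ∈ K, j η v - j η u ≥ ⟪f t - z, v - u⟫) ↔
      -u ∈ normalCone ((fun c => f t - c) '' {ξ : X | ∀ v ∈ K, ⟪ξ, v⟫ ≤ j η v}) z := by
  set F := f t - z with hFdef
  have hj0 : j η 0 = 0 := by
    have := hjpos 2 (by norm_num) 0 hK0
    simp at this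
    linarith
  constructor
  · rintro ⟨huK, hvi⟩
    -- j η u ≤ ⟪F, u⟫ from v = 0
    have hFu : j η u ≤ ⟪F, u⟫ := by
      have := hvi 0 hK0
      simp only [hj0, zero_sub, inner_neg_right] at this
      linarith
    -- F ∈ C(η)
    have hFC : ∀ v ∈ K, ⟪F, v⟫ ≤ j η v := by
      intro v hv
      have key : ∀ l : ℝ, 0 < l → l * (⟪F, v⟫ - j η v) ≤ ⟪F, u⟫ - j η u := by
        intro l hl
        have := hvi (l • v) (hKcone l hl v hv)
        rw [hjpos l hl v hv] at this
        rw [inner_sub_right, real_inner_smul_right] at this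
        linarith
      have := aux_nonpos_of_forall _ _ key
      linarith
    refine ⟨⟨F, hFC, by simp [hFdef]⟩, ?_⟩
    rintro w ⟨c, hc, rfl⟩
    have hcu : ⟪c, u⟫ ≤ j η u := hc u huK
    have h1 : ⟪-u, (f t - c) - z⟫ = ⟪c, u⟫ - ⟪F, u⟫ := by
      rw [hFdef]
      rw [inner_neg_left, show f t - c - z = (f t - z) - c by abel, inner_sub_right]
      rw [real_inner_comm u c, real_inner_comm u (f t - z)]
      ring
    rw [h1]
    linarith
  · rintro ⟨⟨c₀, hc₀, hzc⟩, hnc⟩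
    have hc₀F : c₀ = F := by
      have : f t - c₀ = z := hzc
      rw [hFdef]
      rw [← this]; abel
    have hFC : ∀ v ∈ K, ⟪F, v⟫ ≤ j η v := hc₀F ▸ hc₀
    have hb : ∀ c : X, (∀ v ∈ K, ⟪c, v⟫ ≤ j η v) → ⟪c, u⟫ ≤ ⟪F, u⟫ := by
      intro c hc
      have := hnc (f t - c) ⟨c, hc, rfl⟩
      have h1 : ⟪-u, (f t - c) - z⟫ = ⟪c, u⟫ - ⟪F, u⟫ := by
        rw [hFdef, inner_neg_left, show f t - c - z = (f t - z) - c by abel,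
          inner_sub_right, real_inner_comm u c, real_inner_comm u (f t - z)]
        ring
      rw [h1] at this
      linarith
    -- u ∈ K via separation
    have huK : u ∈ K := by
      by_contra hu
      obtain ⟨φ, cφ, hφK, hφu⟩ := geometric_hahn_banach_closed_point hKcv hKcl hu
      obtain ⟨ξ, hξ⟩ : ∃ ξ : X, ∀ x : X, ⟪ξ, x⟫ = φ x :=
        ⟨(InnerProductSpace.toDual ℝ X).symm φ, fun x => InnerProductSpace.toDual_symm_apply⟩
      have hφ0 : (0:ℝ) < cφ := by simpa using hφK 0 hK0
      have hφneg : ∀ v ∈ K, φ v ≤ 0 := by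
        intro v hv
        refine aux_nonpos_of_forall (φ v) cφ fun l hl => ?_
        have := hφK (l • v) (hKcone l hl v hv)
        rw [map_smul] at this
        simpa using this.le
      have hmem : ∀ v ∈ K, ⟪F + ξ, v⟫ ≤ j η v := by
        intro v hv
        rw [inner_add_left, hξ]
        have := hφneg v hv
        have := hFC v hv
        linarith
      have := hb (F + ξ) hmem
      rw [inner_add_left, hξ] at this
      linarith
    -- j η u ≤ ⟪F, u⟫ via epigraph separation
    have hju : j η u ≤ ⟪F, u⟫ := by
      refine le_of_forall_pos_le_add fun ε hε => ?_
      -- the epigraph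
      set E : Set (X × ℝ) := {p | p.1 ∈ K ∧ j η p.1 ≤ p.2} with hEdef
      obtain ⟨Lj, hLj⟩ := hjlip
      have hjcont : ContinuousOn (j η) K := by
        refine (lipschitzOnWith_iff_dist_le_mul.mpr ?_).continuousOn (K := Real.toNNReal Lj)
        intro x hx y hy
        have h1 := hLj x hx y hy
        have h2 : Lj * ‖x - y‖ ≤ Real.toNNReal Lj * ‖x - y‖ := by
          have := Real.le_coe_toNNReal Lj
          have : (0:ℝ) ≤ ‖x - y‖ := norm_nonneg _
          nlinarith [Real.le_coe_toNNReal Lj]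
        rw [Real.dist_eq, dist_eq_norm]
        linarith
      have hEclosed : IsClosed E := by
        apply IsSeqClosed.isClosed
        intro p q hp hq
        have hx : Filter.Tendsto (fun n => (p n).1) Filter.atTop (nhds q.1) :=
          (Filter.Tendsto.comp (Continuous.tendsto continuous_fst q) hq)
        have hr : Filter.Tendsto (fun n => (p n).2) Filter.atTop (nhds q.2) :=
          (Filter.Tendsto.comp (Continuous.tendsto continuous_snd q) hq)
        have hq1 : q.1 ∈ K :=
          hKcl.mem_of_tendsto hx (Filter.Eventually.of_forall fun n => (hp n).1)
        refine ⟨hq1, ?_⟩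
        have hxin : Filter.Tendsto (fun n => (p n).1) Filter.atTop (nhdsWithin q.1 K) :=
          tendsto_nhdsWithin_iff.mpr ⟨hx, Filter.Eventually.of_forall fun n => (hp n).1⟩
        have hjx : Filter.Tendsto (fun n => j η (p n).1) Filter.atTop (nhds (j η q.1)) :=
          (hjcont q.1 hq1).tendsto.comp hxin
        exact le_of_tendsto_of_tendsto' hjx hr fun n => (hp n).2
      have hEconv : Convex ℝ E := by
        rintro ⟨x, r⟩ ⟨hxK, hxr⟩ ⟨y, s'⟩ ⟨hyK, hys⟩ a b ha hb' hab
        have hmemK : a • x + b • y ∈ K := hKcv hxK hyK ha hb' hab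
        have hj' : j η (a • x + b • y) ≤ a * j η x + b * j η y :=
          hjconv.2 hxK hyK ha hb' hab
        constructor
        · simpa using hmemK
        · simp only [Prod.fst_add, Prod.snd_add, Prod.smul_mk, smul_eq_mul]
          nlinarith
      have hnotmem : (u, j η u - ε) ∉ E := by
        rintro ⟨-, h⟩
        simp only at h
        linarith
      obtain ⟨φ, cφ, hφE, hφu⟩ := geometric_hahn_banach_closed_point hEconv hEclosed hnotmem
      -- decompose φ
      set s : ℝ := φ (0, 1) with hsdef
      have hφeq : ∀ (x : X) (r : ℝ), φ (x, r) = φ (x, 0) + r * s := by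
        intro x r
        have : ((x, r) : X × ℝ) = (x, 0) + r • ((0 : X), (1 : ℝ)) := by
          simp [Prod.ext_iff]
        rw [this, map_add, map_smul]
        simp [hsdef]
      -- the linear part as inner product
      obtain ⟨ξ, hξ⟩ : ∃ ξ : X, ∀ x : X, ⟪ξ, x⟫ = φ (x, 0) := by
        refine ⟨(InnerProductSpace.toDual ℝ X).symm (φ.comp (ContinuousLinearMap.inl ℝ X ℝ)),
          fun x => ?_⟩
        rw [InnerProductSpace.toDual_symm_apply]
        simp
      have hs_le : s ≤ 0 := by
        refine aux_nonpos_of_forall s (cφ - φ (u, 0) - j η u * s) fun l hl => ?_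
        have hmem : ((u, j η u + l) : X × ℝ) ∈ E := ⟨huK, by simp; linarith⟩
        have := hφE _ hmem
        rw [hφeq] at this
        nlinarith
      have hs_ne : s ≠ 0 := by
        intro hs0
        have h1 := hφE (u, j η u) ⟨huK, le_refl _⟩
        rw [hφeq] at h1 hφu
        rw [hs0] at h1 hφu
        simp at h1 hφu
        linarith
      have hs : s < 0 := lt_of_le_of_ne hs_le hs_ne
      have hcφ : 0 < cφ := by
        have := hφE (0, 0) ⟨hK0, by simp [hj0]⟩
        rw [show ((0 : X), (0 : ℝ)) = (0 : X × ℝ) from rfl, map_zero] at this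
        exact this
      -- ξ' := (-s)⁻¹ • ξ ∈ C(η)
      have hkey : ∀ x ∈ K, ⟪ξ, x⟫ + j η x * s < cφ := by
        intro x hx
        have := hφE (x, j η x) ⟨hx, le_refl _⟩
        rw [hφeq] at this
        rw [hξ]
        linarith
      have hξ'def : ∀ x : X, ⟪(-s)⁻¹ • ξ, x⟫ = (-s)⁻¹ * ⟪ξ, x⟫ :=
        fun x => real_inner_smul_left _ _ _
      set ξ' : X := (-s)⁻¹ • ξ with hξ'eq
      have hξ'C : ∀ v ∈ K, ⟪ξ', v⟫ ≤ j η v := by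
        intro v hv
        have h1 : ⟪ξ, v⟫ + j η v * s ≤ 0 := by
          refine aux_nonpos_of_forall _ cφ fun l hl => ?_
          have := hkey (l • v) (hKcone l hl v hv)
          rw [hjpos l hl v hv, real_inner_smul_right] at this
          nlinarith
        rw [hξ'eq, hξ'def]
        rw [inv_mul_le_iff₀ (by linarith : (0:ℝ) < -s)]
        nlinarith
      have h2 := hb ξ' hξ'C
      -- from hφu : cφ < φ (u, j η u - ε)
      rw [hφeq, ← hξ] at hφu
      have h3 : ⟪ξ', u⟫ = (-s)⁻¹ * ⟪ξ, u⟫ := hξ'def u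
      -- cφ < ⟪ξ,u⟫ + (j η u - ε) * s, 0 < cφ  ⇒  (j η u - ε) * (-s) < ⟪ξ,u⟫
      have h4 : (j η u - ε) * (-s) < ⟪ξ, u⟫ := by nlinarith
      have h5 : j η u - ε < ⟪ξ', u⟫ := by
        rw [h3]
        rw [lt_inv_mul_iff₀ (by linarith : (0:ℝ) < -s)]
        nlinarith
      linarith
    refine ⟨huK, fun v hv => ?_⟩
    have := hFC v hv
    rw [ge_iff_le, inner_sub_right]
    linarith
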